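/- Let m ≥ 2 and let c : S_m → ℤ be a function on the symmetric group on {1, …, m}, defining the homogeneous multilinear polynomial P(X_1, …, X_m) = Σ_{σ ∈ S_m} c_σ X_{σ(1)}⋯X_{σ(m)}. For 1 ≤ i < j ≤ m, set Θ_{i,j}(P) = Σ_{σ ∈ S_m, σ⁻¹(i) < σ⁻¹(j)} c_σ ∈ ℤ. Then there exists a noncommutative ring R such that Σ_{σ ∈ S_m} c_σ r_{σ(1)}⋯r_{σ(m)} = 0 for all r_1, …, r_m ∈ R if and only if there is a prime p such that (1) p divides P(1,1,…,1) = Σ_{σ ∈ S_m} c_σ and (2) p divides Θ_{i,j}(P) for all 1 ≤ i < j ≤ m. Moreover, if such a prime p exists, then P is a polynomial identity for the noncommutative ring 𝔽_p⟨U,V⟩/(U², V², UV). -/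

import Mathlib

/-! Label monoid for the 5 "monomials" 0, 1, U, V, VU in the UV-ring. -/
inductive Lbl : Type
  | z | o | eU | eV | eW
  deriving DecidableEq

instance : Fintype Lbl := ⟨{.z, .o, .eU, .eV, .eW}, fun x => by cases x <;> decide⟩

namespace Lbl

def mul : Lbl → Lbl → Lbl
  | .o, x => x
  | x, .o => x
  | .eV, .eU => .eW
  | _, _ => .z

instance : Mul Lbl := ⟨mul⟩
instance : One Lbl := ⟨o⟩

instance : Monoid Lbl where
  mul_assoc := by decide
  one_mul := by decide
  mul_one := by decide

lemma z_mul (x : Lbl) : z * x = z := by cases x <;> rfl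

lemma prod_filter_ne_one : ∀ l : List Lbl, l.prod = (l.filter (· ≠ o)).prod := by
  intro l
  induction l with
  | nil => rfl
  | cons a t ih =>
    by_cases h : a = o
    · subst h
      rw [List.prod_cons, List.filter_cons_of_neg (by simp), ← ih]
      exact one_mul _
    · rw [List.prod_cons, List.filter_cons_of_pos (by simpa using h), List.prod_cons, ih]

lemma triple_z : ∀ a b c : Lbl, a ≠ o → b ≠ o → c ≠ o → a * b * c = z := by decide

lemma prod_eq_z_of_three {a b c : Lbl} {t : List Lbl} (ha : a ≠ o) (hb : b ≠ o) (hc : c ≠ o) :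
    (a :: b :: c :: t).prod = z := by
  have : (a :: b :: c :: t).prod = (a * b * c) * t.prod := by
    simp [List.prod_cons, mul_assoc]
  rw [this, triple_z a b c ha hb hc, z_mul]

end Lbl

/-! Generic lemmas on sorted lists determined by membership. -/
section sorted
variable {α : Type*} [PartialOrder α]

lemma list_eq_nil_of_mem {l : List α} (h : ∀ x, x ∉ l) : l = [] :=
  List.eq_nil_iff_forall_not_mem.2 h

lemma list_eq_singleton_of_sorted {l : List α} (hs : l.Pairwise (· < ·)) {a : α}
    (h : ∀ x, x ∈ l ↔ x = a) : l = [a] := by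
  match l, hs with
  | [], _ => exact absurd ((h a).2 rfl) (by simp)
  | [x], _ => rw [(h x).1 (by simp)]
  | x :: y :: t, hs =>
    exfalso
    have hx : x = a := (h x).1 (by simp)
    have hy : y = a := (h y).1 (by simp)
    have : x < y := (List.pairwise_cons.1 hs).1 y (by simp)
    rw [hx, hy] at this
    exact lt_irrefl _ this

lemma list_eq_pair_of_sorted {l : List α} (hs : l.Pairwise (· < ·)) {a b : α} (hab : a < b)
    (h : ∀ x, x ∈ l ↔ x = a ∨ x = b) : l = [a, b] := by
  match l, hs with
  | [], _ => exact absurd ((h a).2 (Or.inl rfl)) (by simp)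
  | [x], _ =>
    have ha : a = x := by have := (h a).2 (Or.inl rfl); simpa using this
    have hb : b = x := by have := (h b).2 (Or.inr rfl); simpa using this
    exact absurd (ha.trans hb.symm) (ne_of_lt hab)
  | [x, y], hs =>
    have hxy : x < y := (List.pairwise_cons.1 hs).1 y (by simp)
    have hx := (h x).1 (by simp)
    have hy := (h y).1 (by simp)
    rcases hx with rfl | rfl
    · rcases hy with rfl | rfl
      · exact absurd hxy (lt_irrefl _)
      · rfl
    · rcases hy with rfl | rfl
      · exact absurd (hxy.trans hab) (lt_irrefl _)
      · exact absurd hxy (lt_irrefl _)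
  | x :: y :: zz :: t, hs =>
    exfalso
    have hxy : x < y := (List.pairwise_cons.1 hs).1 y (by simp)
    have hyz : y < zz := (List.pairwise_cons.1 (List.pairwise_cons.1 hs).2).1 zz (by simp)
    have hx := (h x).1 (by simp)
    have hy := (h y).1 (by simp)
    have hz := (h zz).1 (by simp)
    rcases hx with rfl | rfl <;> rcases hy with rfl | rfl <;> rcases hz with rfl | rfl <;>
      first
      | exact lt_irrefl _ hxy
      | exact lt_irrefl _ hyz
      | exact lt_irrefl _ (hxy.trans hyz)
      | exact lt_irrefl _ (hab.trans (hxy.trans hyz))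
      | exact lt_irrefl _ (hxy.trans (hyz.trans hab))
      | exact lt_irrefl _ (hab.trans hxy)
      | exact lt_irrefl _ (hab.trans hyz)
      | exact lt_irrefl _ (hxy.trans hab)
      | exact lt_irrefl _ (hyz.trans hab)
end sorted
universe u

theorem Equiv.Perm.apply_inv_self {α : Type*} (f : Equiv.Perm α) (x : α) : f (f⁻¹ x) = x :=
  f.apply_symm_apply x

theorem Equiv.Perm.inv_apply_self {α : Type*} (f : Equiv.Perm α) (x : α) : f⁻¹ (f x) = x :=
  f.symm_apply_apply x

open FreeAlgebra

/-- The relation on `𝔽_p⟨U,V⟩` identifying `U²`, `V²` and `UV` with `0`. -/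
def relUV (p : ℕ) : FreeAlgebra (ZMod p) (Fin 2) → FreeAlgebra (ZMod p) (Fin 2) → Prop :=
  fun a b => b = 0 ∧
    (a = ι (ZMod p) 0 ^ 2 ∨ a = ι (ZMod p) 1 ^ 2 ∨ a = ι (ZMod p) 0 * ι (ZMod p) 1)

/-- The ring `𝔽_p⟨U,V⟩/(U², V², UV)`. -/
abbrev UVRing (p : ℕ) := RingQuot (relUV p)

namespace UVAux

variable (p : ℕ)

noncomputable def genU : UVRing p := RingQuot.mkRingHom (relUV p) (ι (ZMod p) 0)
noncomputable def genV : UVRing p := RingQuot.mkRingHom (relUV p) (ι (ZMod p) 1)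

lemma uu : genU p * genU p = 0 := by
  have h := RingQuot.mkRingHom_rel (show relUV p (ι (ZMod p) 0 ^ 2) 0 from ⟨rfl, Or.inl rfl⟩)
  simpa [sq, map_mul, map_zero, genU] using h

lemma vv : genV p * genV p = 0 := by
  have h := RingQuot.mkRingHom_rel
    (show relUV p (ι (ZMod p) 1 ^ 2) 0 from ⟨rfl, Or.inr (Or.inl rfl)⟩)
  simpa [sq, map_mul, map_zero, genV] using h

lemma uv : genU p * genV p = 0 := by
  have h := RingQuot.mkRingHom_rel
    (show relUV p (ι (ZMod p) 0 * ι (ZMod p) 1) 0 from ⟨rfl, Or.inr (Or.inr rfl)⟩)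
  simpa [map_mul, map_zero, genU, genV] using h

noncomputable def genW : UVRing p := genV p * genU p

lemma uw : genU p * genW p = 0 := by rw [genW, ← mul_assoc, uv, zero_mul]
lemma vw : genV p * genW p = 0 := by rw [genW, ← mul_assoc, vv, zero_mul]
lemma wu : genW p * genU p = 0 := by rw [genW, mul_assoc, uu, mul_zero]
lemma wv : genW p * genV p = 0 := by rw [genW, mul_assoc, uv, mul_zero]
lemma ww : genW p * genW p = 0 := by
  rw [genW, mul_assoc, ← mul_assoc (genU p), uv, zero_mul, mul_zero]

/-- Evaluation of labels in the UV-ring. -/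
noncomputable def ev : Lbl → UVRing p
  | .z => 0
  | .o => 1
  | .eU => genU p
  | .eV => genV p
  | .eW => genW p

lemma ev_one : ev p 1 = 1 := rfl

lemma genW_def : genW p = genV p * genU p := rfl

lemma ev_mul : ∀ a b : Lbl, ev p (a * b) = ev p a * ev p b := by
  intro a b
  cases a <;> cases b <;>
    simp only [ev, show ∀ x y : Lbl, x * y = Lbl.mul x y from fun _ _ => rfl, Lbl.mul,
      genW_def] <;>
    first
      | rfl
      | simp [uu, vv, uv]
      | (rw [← mul_assoc]; simp [uu, vv, uv])
      | (rw [mul_assoc]; simp [uu, vv, uv])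
      | (rw [mul_assoc, ← mul_assoc (genU p)]; simp [uu, vv, uv])

lemma ev_list_prod : ∀ l : List Lbl, ev p l.prod = (l.map (ev p)).prod := by
  intro l
  induction l with
  | nil => simpa using ev_one p
  | cons a t ih => rw [List.prod_cons, ev_mul, ih, List.map_cons, List.prod_cons]

/-- The span of the four monomials. -/
noncomputable def sp : Submodule (ZMod p) (UVRing p) :=
  Submodule.span (ZMod p) {1, genU p, genV p, genW p}

lemma mem_sp_of_basic {x : UVRing p}
    (h : x = 1 ∨ x = genU p ∨ x = genV p ∨ x = genW p) : x ∈ sp p := by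
  apply Submodule.subset_span
  rcases h with rfl | rfl | rfl | rfl
  · exact Set.mem_insert _ _
  · exact Set.mem_insert_of_mem _ (Set.mem_insert _ _)
  · exact Set.mem_insert_of_mem _ (Set.mem_insert_of_mem _ (Set.mem_insert _ _))
  · exact Set.mem_insert_of_mem _ (Set.mem_insert_of_mem _ (Set.mem_insert_of_mem _ rfl))

lemma sp_mul_closed : ∀ a ∈ sp p, ∀ b ∈ sp p, a * b ∈ sp p := by
  intro a ha
  induction ha using Submodule.span_induction with
  | mem x hx =>
    intro b hb
    induction hb using Submodule.span_induction with
    | mem y hy =>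
      simp only [Set.mem_insert_iff, Set.mem_singleton_iff] at hx hy
      rcases hx with rfl | rfl | rfl | rfl <;> rcases hy with rfl | rfl | rfl | rfl <;>
        (try simp only [one_mul, mul_one, uu, vv, uv, uw, vw, wu, wv, ww]) <;>
        first
          | exact mem_sp_of_basic p (Or.inr (Or.inr (Or.inr (genW_def p).symm)))
          | exact Submodule.zero_mem _
          | exact mem_sp_of_basic p (Or.inl rfl)
          | exact mem_sp_of_basic p (Or.inr (Or.inl rfl))
          | exact mem_sp_of_basic p (Or.inr (Or.inr (Or.inl rfl)))
          | exact mem_sp_of_basic p (Or.inr (Or.inr (Or.inr rfl)))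
    | zero => rw [mul_zero]; exact Submodule.zero_mem _
    | add y z _ _ hy hz => rw [mul_add]; exact Submodule.add_mem _ hy hz
    | smul r y _ hy => rw [mul_smul_comm]; exact Submodule.smul_mem _ _ hy
  | zero => intro b _; rw [zero_mul]; exact Submodule.zero_mem _
  | add x y _ _ hx hy => intro b hb; rw [add_mul]; exact Submodule.add_mem _ (hx b hb) (hy b hb)
  | smul r x _ hx => intro b hb; rw [smul_mul_assoc]; exact Submodule.smul_mem _ _ (hx b hb)

lemma mem_sp (x : UVRing p) : x ∈ sp p := by
  obtain ⟨y, rfl⟩ := RingQuot.mkRingHom_surjective (relUV p) x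
  induction y using FreeAlgebra.induction with
  | grade0 r =>
    have h1 : (RingQuot.mkRingHom (relUV p)) (algebraMap (ZMod p) _ r)
        = algebraMap (ZMod p) (UVRing p) r := by
      rw [← RingQuot.mkAlgHom_coe (ZMod p) (relUV p)]
      exact (RingQuot.mkAlgHom (ZMod p) (relUV p)).commutes r
    rw [h1, Algebra.algebraMap_eq_smul_one]
    exact Submodule.smul_mem _ _ (mem_sp_of_basic p (Or.inl rfl))
  | grade1 i =>
    fin_cases i
    · exact mem_sp_of_basic p (Or.inr (Or.inl rfl))
    · exact mem_sp_of_basic p (Or.inr (Or.inr (Or.inl rfl)))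
  | mul a b ha hb => rw [map_mul]; exact sp_mul_closed p _ ha _ hb
  | add a b ha hb => rw [map_add]; exact Submodule.add_mem _ ha hb

noncomputable def toMat (p : ℕ) : UVRing p →+* Matrix (Fin 3) (Fin 3) (ZMod p) :=
  RingQuot.lift ⟨(FreeAlgebra.lift (ZMod p)
      ![Matrix.single 1 2 (1 : ZMod p),
        Matrix.single 0 1 (1 : ZMod p)]).toRingHom, by
    rintro x y ⟨rfl, h | h | h⟩ <;> subst h <;>
      simp only [sq, map_mul, map_zero, AlgHom.toRingHom_eq_coe, RingHom.coe_coe,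
        FreeAlgebra.lift_ι_apply, Matrix.cons_val_zero, Matrix.cons_val_one, Matrix.head_cons]
    · simp
    · simp
    · simp⟩

lemma toMat_mk (p : ℕ) (x : FreeAlgebra (ZMod p) (Fin 2)) :
    toMat p (RingQuot.mkRingHom (relUV p) x) = FreeAlgebra.lift (ZMod p)
      ![Matrix.single 1 2 (1 : ZMod p), Matrix.single 0 1 (1 : ZMod p)] x :=
  RingQuot.lift_mkRingHom_apply _ _ _

lemma toMat_vu (p : ℕ) :
    toMat p (genV p * genU p) = Matrix.single 0 2 (1 : ZMod p) := by
  rw [map_mul, genV, genU, toMat_mk, toMat_mk]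
  simp only [FreeAlgebra.lift_ι_apply, Matrix.cons_val_zero, Matrix.cons_val_one,
    Matrix.head_cons]
  rw [Matrix.single_mul_single_same, one_mul]

lemma vu_ne_zero (p : ℕ) [Fact (1 < p)] : genV p * genU p ≠ 0 := by
  intro h
  have h2 := congrArg (toMat p) h
  rw [toMat_vu, map_zero] at h2
  have h3 := congrFun (congrFun h2 0) 2
  simp [Matrix.single] at h3

/-- A multilinear map vanishing on a spanning set vanishes. -/
lemma multilinear_vanish_of_span {K M N : Type*} [CommRing K] [AddCommGroup M] [AddCommGroup N]
    [Module K M] [Module K N] {m : ℕ} (f : MultilinearMap K (fun _ : Fin m => M) N)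
    (s : Set M) (hspan : ∀ x : M, x ∈ Submodule.span K s)
    (h0 : ∀ g : Fin m → M, (∀ i, g i ∈ s) → f g = 0) : ∀ r : Fin m → M, f r = 0 := by
  suffices H : ∀ k : ℕ, ∀ r : Fin m → M, (∀ i : Fin m, k ≤ (i : ℕ) → r i ∈ s) → f r = 0 by
    intro r
    exact H m r (fun i hi => absurd i.isLt (by omega))
  intro k
  induction k with
  | zero => exact fun r hr => h0 r (fun i => hr i (Nat.zero_le _))
  | succ k ih =>
    intro r hr
    by_cases hk : k < m
    · set i : Fin m := ⟨k, hk⟩ with hi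
      have key : ∀ x : M, ∀ hx : x ∈ Submodule.span K s, f (Function.update r i x) = 0 := by
        intro x hx
        induction hx using Submodule.span_induction with
        | mem y hy =>
          apply ih
          intro l hl
          rcases eq_or_ne l i with rfl | hne
          · rwa [Function.update_self]
          · rw [Function.update_of_ne hne]
            apply hr
            have : (l : ℕ) ≠ k := fun hc => hne (Fin.ext (by simp [hi, hc]))
            omega
        | zero => exact f.map_coord_zero i (Function.update_self i 0 r)
        | add y z _ _ hy hz => rw [f.map_update_add]; rw [hy, hz, add_zero]
        | smul a y _ hy => rw [f.map_update_smul, hy, smul_zero]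
      have := key (r i) (hspan (r i))
      rwa [Function.update_eq_self] at this
    · exact ih r (fun l hl => absurd (lt_of_le_of_lt hl l.isLt) (by omega))

lemma label_sum_zero {p : ℕ} (m : ℕ) (c : Equiv.Perm (Fin m) → ℤ)
    (hS : (p : ℤ) ∣ ∑ σ : Equiv.Perm (Fin m), c σ)
    (hθ : ∀ i j : Fin m, i < j →
      (p : ℤ) ∣ ∑ σ ∈ Finset.filter (fun σ : Equiv.Perm (Fin m) => σ⁻¹ i < σ⁻¹ j)
        Finset.univ, c σ)
    (lbl : Fin m → Lbl) :
    ∑ σ : Equiv.Perm (Fin m), c σ • ev p ((List.ofFn fun t => lbl (σ t)).prod) = 0 := by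
  classical
  have hsmul : ∀ {n : ℤ}, (p : ℤ) ∣ n → ∀ x : UVRing p, n • x = 0 := by
    intro n hn x
    rw [← Int.cast_smul_eq_zsmul (ZMod p), (ZMod.intCast_zmod_eq_zero_iff_dvd n p).2 hn,
      zero_smul]
  set B : Finset (Fin m) := Finset.filter (fun i => lbl i ≠ Lbl.o) Finset.univ with hB
  have hTmem : ∀ (σ : Equiv.Perm (Fin m)) (t : Fin m),
      t ∈ (List.finRange m).filter (fun t => decide (lbl (σ t) ≠ Lbl.o)) ↔
        lbl (σ t) ≠ Lbl.o := by
    intro σ t; simp [List.mem_filter]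
  have hTsort : ∀ σ : Equiv.Perm (Fin m),
      ((List.finRange m).filter (fun t => decide (lbl (σ t) ≠ Lbl.o))).Pairwise (· < ·) :=
    fun σ => List.Pairwise.sublist List.filter_sublist (List.pairwise_lt_finRange m)
  have hprod : ∀ σ : Equiv.Perm (Fin m),
      (List.ofFn fun t => lbl (σ t)).prod =
        (((List.finRange m).filter (fun t => decide (lbl (σ t) ≠ Lbl.o))).map
          (fun t => lbl (σ t))).prod := by
    intro σ
    rw [Lbl.prod_filter_ne_one, List.ofFn_eq_map, List.filter_map]
    rfl
  have hlen : ∀ σ : Equiv.Perm (Fin m),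
      ((List.finRange m).filter (fun t => decide (lbl (σ t) ≠ Lbl.o))).length = B.card := by
    intro σ
    rw [← List.toFinset_card_of_nodup (List.Nodup.filter _ (List.nodup_finRange m))]
    have h1 : ((List.finRange m).filter (fun t => decide (lbl (σ t) ≠ Lbl.o))).toFinset
        = Finset.filter (fun t => lbl (σ t) ≠ Lbl.o) Finset.univ := by
      ext t
      simp only [List.mem_toFinset, hTmem, Finset.mem_filter, Finset.mem_univ, true_and]
    rw [h1]
    apply Finset.card_bij (fun t _ => σ t)
    · intro a ha
      rw [hB, Finset.mem_filter]
      exact ⟨Finset.mem_univ _, (Finset.mem_filter.1 ha).2⟩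
    · intro a₁ _ a₂ _ h
      exact σ.injective h
    · intro b hb
      refine ⟨σ⁻¹ b, ?_, σ.apply_inv_self b⟩
      rw [Finset.mem_filter]
      refine ⟨Finset.mem_univ _, ?_⟩
      rw [σ.apply_inv_self]
      exact (Finset.mem_filter.1 hb).2
  by_cases h3 : 3 ≤ B.card
  · -- every single product is zero
    apply Finset.sum_eq_zero
    intro σ _
    have hz : (List.ofFn fun t => lbl (σ t)).prod = Lbl.z := by
      rw [hprod σ]
      set l' := ((List.finRange m).filter (fun t => decide (lbl (σ t) ≠ Lbl.o))).map
        (fun t => lbl (σ t)) with hl'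
      have hlen' : 3 ≤ l'.length := by rw [hl', List.length_map, hlen σ]; exact h3
      have hno : ∀ x ∈ l', x ≠ Lbl.o := by
        intro x hx
        rw [hl', List.mem_map] at hx
        obtain ⟨t, ht, rfl⟩ := hx
        exact (hTmem σ t).1 ht
      match l', hlen', hno with
      | a :: b :: cc :: t, _, hno =>
        exact Lbl.prod_eq_z_of_three (hno a (by simp)) (hno b (by simp)) (hno cc (by simp))
    rw [hz]
    show c σ • ev p Lbl.z = 0
    rw [show ev p Lbl.z = 0 from rfl]; exact smul_zero _
  · interval_cases hc : B.card
    · -- card 0 : all labels are one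
      have hall : ∀ i, lbl i = Lbl.o := by
        intro i
        by_contra h
        have : i ∈ B := by rw [hB, Finset.mem_filter]; exact ⟨Finset.mem_univ _, h⟩
        rw [Finset.card_eq_zero.1 hc] at this
        exact absurd this (Finset.notMem_empty _)
      have h1 : ∀ σ : Equiv.Perm (Fin m), (List.ofFn fun t => lbl (σ t)).prod = 1 := by
        intro σ
        apply List.prod_eq_one
        intro x hx
        rw [List.mem_ofFn] at hx
        obtain ⟨t, rfl⟩ := hx
        exact hall _
      rw [Finset.sum_congr rfl (fun σ _ => by rw [h1 σ])]
      rw [← @Finset.sum_smul _ ℤ (UVRing p) _ _ (AddCommGroup.toIntModule _)]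
      exact hsmul hS _
    · -- card 1
      obtain ⟨i, hBi⟩ := Finset.card_eq_one.1 hc
      have hmem : ∀ k, lbl k ≠ Lbl.o ↔ k = i := by
        intro k
        constructor
        · intro h
          have : k ∈ B := by rw [hB, Finset.mem_filter]; exact ⟨Finset.mem_univ _, h⟩
          rw [hBi, Finset.mem_singleton] at this; exact this
        · intro h
          have : k ∈ B := by rw [hBi]; exact Finset.mem_singleton.2 h
          rw [hB, Finset.mem_filter] at this; exact this.2
      have h1 : ∀ σ : Equiv.Perm (Fin m), (List.ofFn fun t => lbl (σ t)).prod = lbl i := by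
        intro σ
        rw [hprod σ]
        have : ((List.finRange m).filter (fun t => decide (lbl (σ t) ≠ Lbl.o))) = [σ⁻¹ i] := by
          apply list_eq_singleton_of_sorted (hTsort σ)
          intro t
          rw [hTmem σ t, hmem (σ t)]
          constructor
          · intro h; rw [← h, σ.inv_apply_self]
          · rintro rfl; rw [σ.apply_inv_self]
        rw [this, List.map_singleton, List.prod_singleton, σ.apply_inv_self]
      rw [Finset.sum_congr rfl (fun σ _ => by rw [h1 σ]), ← @Finset.sum_smul _ ℤ (UVRing p) _ _ (AddCommGroup.toIntModule _)]
      exact hsmul hS _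
    · -- card 2
      obtain ⟨a, b, hab, hBab⟩ := Finset.card_eq_two.1 hc
      -- normalize so that i < j
      obtain ⟨i, j, hij, hBij⟩ : ∃ i j : Fin m, i < j ∧ B = {i, j} := by
        rcases lt_or_gt_of_ne hab with h | h
        · exact ⟨a, b, h, hBab⟩
        · exact ⟨b, a, h, by rw [hBab, Finset.pair_comm]⟩
      have hmem : ∀ k, lbl k ≠ Lbl.o ↔ k = i ∨ k = j := by
        intro k
        rw [show (lbl k ≠ Lbl.o) ↔ k ∈ B from by
          rw [hB, Finset.mem_filter]; simp, hBij]
        simp [Finset.mem_insert]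
      have hinv : (σ : Equiv.Perm (Fin m)) → σ⁻¹ i ≠ σ⁻¹ j := by
        intro σ h
        exact (ne_of_lt hij) (by rw [← σ.apply_inv_self i, h, σ.apply_inv_self])
      have h1 : ∀ σ : Equiv.Perm (Fin m), (List.ofFn fun t => lbl (σ t)).prod =
          if σ⁻¹ i < σ⁻¹ j then lbl i * lbl j else lbl j * lbl i := by
        intro σ
        rw [hprod σ]
        have hmemT : ∀ t, t ∈ (List.finRange m).filter
            (fun t => decide (lbl (σ t) ≠ Lbl.o)) ↔ t = σ⁻¹ i ∨ t = σ⁻¹ j := by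
          intro t
          rw [hTmem σ t, hmem (σ t)]
          constructor
          · rintro (h | h)
            · exact Or.inl (by rw [← h, σ.inv_apply_self])
            · exact Or.inr (by rw [← h, σ.inv_apply_self])
          · rintro (rfl | rfl)
            · exact Or.inl (σ.apply_inv_self i)
            · exact Or.inr (σ.apply_inv_self j)
        rcases lt_or_gt_of_ne (hinv σ) with h | h
        · rw [if_pos h]
          rw [list_eq_pair_of_sorted (hTsort σ) h hmemT]
          simp [σ.apply_inv_self]
        · rw [if_neg (not_lt_of_gt h)]
          have hmemT' : ∀ t, t ∈ (List.finRange m).filter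
              (fun t => decide (lbl (σ t) ≠ Lbl.o)) ↔ t = σ⁻¹ j ∨ t = σ⁻¹ i := by
            intro t; rw [hmemT t]; exact or_comm
          rw [list_eq_pair_of_sorted (hTsort σ) h hmemT']
          simp [σ.apply_inv_self]
      rw [Finset.sum_congr rfl (fun σ _ => by rw [h1 σ])]
      have hsplit : ∀ σ : Equiv.Perm (Fin m),
          c σ • ev p (if σ⁻¹ i < σ⁻¹ j then lbl i * lbl j else lbl j * lbl i)
          = if σ⁻¹ i < σ⁻¹ j then c σ • ev p (lbl i * lbl j) else c σ • ev p (lbl j * lbl i) := by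
        intro σ
        by_cases h : σ⁻¹ i < σ⁻¹ j <;> simp only [h, if_true, if_false]
      rw [Finset.sum_congr rfl (fun σ _ => hsplit σ), Finset.sum_ite]
      rw [← @Finset.sum_smul _ ℤ (UVRing p) _ _ (AddCommGroup.toIntModule _), ← @Finset.sum_smul _ ℤ (UVRing p) _ _ (AddCommGroup.toIntModule _)]
      rw [hsmul (hθ i j hij) _, zero_add]
      have hdvd : (p : ℤ) ∣ ∑ σ ∈ Finset.filter
          (fun σ : Equiv.Perm (Fin m) => ¬ σ⁻¹ i < σ⁻¹ j) Finset.univ, c σ := by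
        have hsum := Finset.sum_filter_add_sum_filter_not Finset.univ
          (fun σ : Equiv.Perm (Fin m) => σ⁻¹ i < σ⁻¹ j) c
        have : ∑ σ ∈ Finset.filter (fun σ : Equiv.Perm (Fin m) => ¬ σ⁻¹ i < σ⁻¹ j)
            Finset.univ, c σ = (∑ σ : Equiv.Perm (Fin m), c σ) -
            ∑ σ ∈ Finset.filter (fun σ : Equiv.Perm (Fin m) => σ⁻¹ i < σ⁻¹ j)
              Finset.univ, c σ := by
          rw [← hsum]; ring
        rw [this]
        exact dvd_sub hS (hθ i j hij)
      exact hsmul hdvd _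

lemma identity_UVRing {p : ℕ} (m : ℕ) (c : Equiv.Perm (Fin m) → ℤ)
    (hS : (p : ℤ) ∣ ∑ σ : Equiv.Perm (Fin m), c σ)
    (hθ : ∀ i j : Fin m, i < j →
      (p : ℤ) ∣ ∑ σ ∈ Finset.filter (fun σ : Equiv.Perm (Fin m) => σ⁻¹ i < σ⁻¹ j)
        Finset.univ, c σ) :
    ∀ r : Fin m → UVRing p,
      ∑ σ : Equiv.Perm (Fin m), c σ • (List.ofFn fun t => r (σ t)).prod = 0 := by
  classical
  set f : MultilinearMap (ZMod p) (fun _ : Fin m => UVRing p) (UVRing p) :=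
    ∑ σ : Equiv.Perm (Fin m),
      c σ • (MultilinearMap.mkPiAlgebraFin (ZMod p) m (UVRing p)).domDomCongr σ with hf
  have hfr : ∀ r : Fin m → UVRing p,
      f r = ∑ σ : Equiv.Perm (Fin m), c σ • (List.ofFn fun t => r (σ t)).prod := by
    intro r
    rw [hf, MultilinearMap.sum_apply]
    refine Finset.sum_congr rfl (fun σ _ => ?_)
    rfl
  intro r
  rw [← hfr]
  refine multilinear_vanish_of_span f {1, genU p, genV p, genW p} (mem_sp p) ?_ r
  intro g hg
  have hlbl : ∀ i : Fin m, ∃ l : Lbl, ev p l = g i := by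
    intro i
    have := hg i
    simp only [Set.mem_insert_iff, Set.mem_singleton_iff] at this
    rcases this with h | h | h | h
    exacts [⟨Lbl.o, h.symm⟩, ⟨Lbl.eU, h.symm⟩, ⟨Lbl.eV, h.symm⟩, ⟨Lbl.eW, h.symm⟩]
  choose lbl hlbl using hlbl
  rw [hfr]
  have hrw : ∀ σ : Equiv.Perm (Fin m), (List.ofFn fun t => g (σ t)).prod
      = ev p ((List.ofFn fun t => lbl (σ t)).prod) := by
    intro σ
    rw [ev_list_prod, List.map_ofFn]
    have he : (ev p ∘ fun t => lbl (σ t)) = fun t => g (σ t) := funext fun t => hlbl (σ t)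
    rw [he]
  rw [Finset.sum_congr rfl (fun σ _ => by rw [hrw σ])]
  exact label_sum_zero m c hS hθ lbl

end UVAux

section ProdLemmas
variable {M : Type*} [Monoid M]

lemma ofFn_prod_eq_one {m : ℕ} {f : Fin m → M} (h : ∀ k, f k = 1) :
    (List.ofFn f).prod = 1 := by
  apply List.prod_eq_one
  intro x hx
  rw [List.mem_ofFn] at hx
  obtain ⟨t, rfl⟩ := hx
  exact h t

lemma ofFn_prod_single :
    ∀ {m : ℕ} (s : Fin m) (x : M), (List.ofFn fun k => if k = s then x else 1).prod = x := by
  intro m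
  induction m with
  | zero => exact fun s => s.elim0
  | succ n ih =>
    intro s x
    rw [List.ofFn_succ, List.prod_cons]
    by_cases h0 : s = 0
    · subst h0
      rw [if_pos rfl]
      have htail : (List.ofFn fun i : Fin n =>
          if i.succ = (0 : Fin (n + 1)) then x else 1).prod = 1 := by
        apply ofFn_prod_eq_one
        intro k
        rw [if_neg (Fin.succ_ne_zero k)]
      rw [htail, mul_one]
    · obtain ⟨s', rfl⟩ : ∃ s' : Fin n, s'.succ = s := by
        rcases Fin.eq_succ_of_ne_zero h0 with ⟨s', rfl⟩
        exact ⟨s', rfl⟩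
      rw [if_neg (fun h => h0 h.symm), one_mul]
      have : (fun i : Fin n => if i.succ = s'.succ then x else 1)
          = fun i : Fin n => if i = s' then x else 1 := by
        funext i
        simp only [Fin.succ_inj]
      rw [this, ih]

lemma ofFn_prod_pair :
    ∀ {m : ℕ} (s t : Fin m), s ≠ t → ∀ (x y : M),
      (List.ofFn fun k => if k = s then x else if k = t then y else 1).prod
        = if s < t then x * y else y * x := by
  intro m
  induction m with
  | zero => exact fun s => s.elim0
  | succ n ih =>
    intro s t hst x y
    rw [List.ofFn_succ, List.prod_cons]
    by_cases hs0 : s = 0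
    · subst hs0
      obtain ⟨t', rfl⟩ := Fin.eq_succ_of_ne_zero (fun h => hst h.symm)
      rw [if_pos rfl]
      have htail : (fun i : Fin n => if i.succ = (0 : Fin (n + 1)) then x
          else if i.succ = t'.succ then y else 1)
          = fun i : Fin n => if i = t' then y else 1 := by
        funext i
        rw [if_neg (Fin.succ_ne_zero i)]
        simp only [Fin.succ_inj]
      rw [htail, ofFn_prod_single, if_pos (Fin.succ_pos t')]
    · by_cases ht0 : t = 0
      · subst ht0
        obtain ⟨s', rfl⟩ := Fin.eq_succ_of_ne_zero hs0
        rw [if_neg (fun h => hs0 h.symm), if_pos rfl]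
        have htail : (fun i : Fin n => if i.succ = s'.succ then x
            else if i.succ = (0 : Fin (n + 1)) then y else 1)
            = fun i : Fin n => if i = s' then x else 1 := by
          funext i
          by_cases h : i = s'
          · rw [if_pos h, if_pos (by rw [h])]
          · rw [if_neg (by simpa [Fin.succ_inj] using h), if_neg (Fin.succ_ne_zero i),
              if_neg h]
        rw [htail, ofFn_prod_single, if_neg (Fin.not_lt_zero _)]
      · obtain ⟨s', rfl⟩ := Fin.eq_succ_of_ne_zero hs0
        obtain ⟨t', rfl⟩ := Fin.eq_succ_of_ne_zero ht0
        rw [if_neg (fun h => hs0 h.symm), if_neg (fun h => ht0 h.symm), one_mul]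
        have hst' : s' ≠ t' := fun h => hst (by rw [h])
        have htail : (fun i : Fin n => if i.succ = s'.succ then x
            else if i.succ = t'.succ then y else 1)
            = fun i : Fin n => if i = s' then x else if i = t' then y else 1 := by
          funext i
          simp only [Fin.succ_inj]
        rw [htail, ih s' t' hst']
        simp only [Fin.succ_lt_succ_iff]

end ProdLemmas

/-- Theorem 1.2: a homogeneous multilinear polynomial
`P = Σ_σ c_σ X_{σ(1)}⋯X_{σ(m)}` is an identity for some noncommutative ring iff there is a
prime `p` dividing `P(1,…,1)` and all the `Θ_{i,j}(P)`; moreover, in that case `P` is an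
identity for `𝔽_p⟨U,V⟩/(U², V², UV)`. -/
theorem multilinear_identity_noncomm (m : ℕ) (hm : 2 ≤ m) (c : Equiv.Perm (Fin m) → ℤ) :
    ((∃ (R : Type u) (_ : Ring R), (∃ a b : R, a * b ≠ b * a) ∧
        ∀ r : Fin m → R,
          ∑ σ : Equiv.Perm (Fin m), c σ • (List.ofFn fun t => r (σ t)).prod = 0) ↔
      (∃ p : ℕ, p.Prime ∧
        ((p : ℤ) ∣ ∑ σ : Equiv.Perm (Fin m), c σ) ∧
        ∀ i j : Fin m, i < j →
          (p : ℤ) ∣ ∑ σ ∈ Finset.filter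
            (fun σ : Equiv.Perm (Fin m) => σ⁻¹ i < σ⁻¹ j) Finset.univ, c σ)) ∧
    ∀ p : ℕ, p.Prime →
      ((p : ℤ) ∣ ∑ σ : Equiv.Perm (Fin m), c σ) →
      (∀ i j : Fin m, i < j →
        (p : ℤ) ∣ ∑ σ ∈ Finset.filter
          (fun σ : Equiv.Perm (Fin m) => σ⁻¹ i < σ⁻¹ j) Finset.univ, c σ) →
      ∀ r : Fin m → UVRing p,
        ∑ σ : Equiv.Perm (Fin m), c σ • (List.ofFn fun t => r (σ t)).prod = 0 := by
  classical
  constructor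
  · constructor
    · -- forward direction
      rintro ⟨R, _, ⟨a, b, hab⟩, hid⟩
      set S : ℤ := ∑ σ : Equiv.Perm (Fin m), c σ with hSdef
      have hone : ∀ x : R, S • x = 0 := by
        have h1 : S • (1 : R) = 0 := by
          have h := hid (fun _ => 1)
          rw [Finset.sum_congr rfl (fun σ _ => by
            rw [ofFn_prod_eq_one (f := fun t => (1 : R)) (fun _ => rfl)])] at h
          rwa [← Finset.sum_smul] at h
        intro x
        calc S • x = (S • (1 : R)) * x := by rw [smul_mul_assoc, one_mul]
        _ = 0 := by rw [h1, zero_mul]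
      have hd_ne : a * b - b * a ≠ 0 := sub_ne_zero_of_ne hab
      have hθd : ∀ i j : Fin m, i < j →
          (∑ σ ∈ Finset.filter (fun σ : Equiv.Perm (Fin m) => σ⁻¹ i < σ⁻¹ j)
            Finset.univ, c σ) • (a * b - b * a) = 0 := by
        intro i j hij
        have hid' := hid (fun k => if k = i then a else if k = j then b else 1)
        have hrw : ∀ σ : Equiv.Perm (Fin m),
            (List.ofFn fun t => if σ t = i then a else if σ t = j then b else 1).prod
            = if σ⁻¹ i < σ⁻¹ j then a * b else b * a := by
          intro σ
          have hfun : (fun t => if σ t = i then a else if σ t = j then b else 1)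
              = fun t => if t = σ⁻¹ i then a else if t = σ⁻¹ j then b else 1 := by
            funext t
            exact if_congr
              ⟨fun h => by rw [← h, σ.inv_apply_self], fun h => by rw [h, σ.apply_inv_self]⟩
              rfl
              (if_congr
                ⟨fun h => by rw [← h, σ.inv_apply_self],
                 fun h => by rw [h, σ.apply_inv_self]⟩ rfl rfl)
          have hne : σ⁻¹ i ≠ σ⁻¹ j := fun h =>
            (ne_of_lt hij) (by rw [← σ.apply_inv_self i, h, σ.apply_inv_self])
          rw [hfun, ofFn_prod_pair _ _ hne]
        simp only [hrw, smul_ite] at hid'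
        rw [Finset.sum_ite, ← Finset.sum_smul, ← Finset.sum_smul] at hid'
        set Θ : ℤ := ∑ σ ∈ Finset.filter (fun σ : Equiv.Perm (Fin m) => σ⁻¹ i < σ⁻¹ j)
          Finset.univ, c σ with hΘdef
        set Θ' : ℤ := ∑ σ ∈ Finset.filter (fun σ : Equiv.Perm (Fin m) => ¬ σ⁻¹ i < σ⁻¹ j)
          Finset.univ, c σ with hΘ'def
        have hsum : Θ + Θ' = S := by
          rw [hSdef, hΘdef, hΘ'def,
            Finset.sum_filter_add_sum_filter_not Finset.univ _ c]
        have e2 : Θ • (b * a) + Θ' • (b * a) = 0 := by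
          rw [← add_smul, hsum]; exact hone _
        have e1' : Θ • (a * b) = -(Θ' • (b * a)) := eq_neg_of_add_eq_zero_left hid'
        have e2' : Θ • (b * a) = -(Θ' • (b * a)) := eq_neg_of_add_eq_zero_left e2
        rw [smul_sub, e1', e2', sub_self]
      have hSd : S • (a * b - b * a) = 0 := hone _
      let I : Ideal ℤ := {
        carrier := {n : ℤ | n • (a * b - b * a) = 0}
        add_mem' := fun {x y} hx hy => by
          simp only [Set.mem_setOf_eq] at *
          rw [add_smul, hx, hy, add_zero]
        zero_mem' := by simp only [Set.mem_setOf_eq, zero_smul]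
        smul_mem' := fun n x hx => by
          simp only [Set.mem_setOf_eq, smul_eq_mul] at *
          rw [mul_smul, hx, smul_zero] }
      haveI : I.IsPrincipal := IsPrincipalIdealRing.principal I
      obtain ⟨g, hgI⟩ := Submodule.IsPrincipal.principal I
      have hgdvd : ∀ n : ℤ, n ∈ I → g ∣ n := by
        intro n hn
        rw [hgI] at hn
        exact Ideal.mem_span_singleton.1 hn
      have hSmem : S ∈ I := hSd
      have hθmem : ∀ i j : Fin m, i < j →
          (∑ σ ∈ Finset.filter (fun σ : Equiv.Perm (Fin m) => σ⁻¹ i < σ⁻¹ j)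
            Finset.univ, c σ) ∈ I := fun i j hij => hθd i j hij
      have hg1 : ¬ g ∣ 1 := by
        intro hdvd
        have h1I : (1 : ℤ) ∈ I := by
          rw [hgI]
          exact Ideal.mem_span_singleton.2 hdvd
        have : (1 : ℤ) • (a * b - b * a) = 0 := h1I
        rw [one_smul] at this
        exact hd_ne this
      by_cases hg0 : g = 0
      · refine ⟨2, Nat.prime_two, ?_, fun i j hij => ?_⟩
        · have := hgdvd S hSmem
          rw [hg0, zero_dvd_iff] at this
          rw [this]; exact dvd_zero _
        · have := hgdvd _ (hθmem i j hij)
          rw [hg0, zero_dvd_iff] at this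
          rw [this]; exact dvd_zero _
      · have hne1 : g.natAbs ≠ 1 := fun h =>
          hg1 (isUnit_iff_dvd_one.1 (Int.isUnit_iff_natAbs_eq.2 h))
        obtain ⟨q, hq, hqg⟩ := Nat.exists_prime_and_dvd hne1
        have hqZ : (q : ℤ) ∣ g :=
          dvd_trans (Int.natCast_dvd_natCast.2 hqg) (Int.natAbs_dvd.2 dvd_rfl)
        exact ⟨q, hq, dvd_trans hqZ (hgdvd S hSmem),
          fun i j hij => dvd_trans hqZ (hgdvd _ (hθmem i j hij))⟩
    · -- backward direction : use the UV ring
      rintro ⟨p, hp, h1, h2⟩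
      haveI : Fact (1 < p) := ⟨hp.one_lt⟩
      refine ⟨ULift.{u} (UVRing p), inferInstance,
        ⟨⟨ULift.up (UVAux.genV p), ULift.up (UVAux.genU p), ?_⟩, ?_⟩⟩
      · intro h
        have h' : UVAux.genV p * UVAux.genU p = UVAux.genU p * UVAux.genV p :=
          congrArg ULift.down h
        rw [UVAux.uv] at h'
        exact UVAux.vu_ne_zero p h'
      · intro r
        have key := UVAux.identity_UVRing m c h1 h2 (fun k => (r k).down)
        apply (ULift.ringEquiv : ULift.{u} (UVRing p) ≃+* UVRing p).injective
        rw [map_zero, map_sum]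
        rw [← key]
        refine Finset.sum_congr rfl (fun σ _ => ?_)
        rw [map_zsmul]
        congr 1
        rw [map_list_prod, List.map_ofFn]
        rfl
  · -- moreover
    intro p hp h1 h2
    exact UVAux.identity_UVRing m c h1 h2
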